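/- Define f(x,y) = h₂(h₂⁻¹(x) * h₂⁻¹(y)) − y for x, y ∈ (0, 1/2). Then f is strictly increasing in x and strictly decreasing in y: for all x, x′, y, y′ ∈ (0, 1/2), if x < x′ then f(x,y) < f(x′,y), and if y < y′ then f(x,y) > f(x,y′). -/

import Mathlib

/-- The binary entropy function `h₂(x) = −x log₂ x − (1−x) log₂ (1−x)`
(with `0 · log₂ 0 = 0`, automatic since `Real.logb 2 0 = 0`). -/
noncomputable def h2 (x : ℝ) : ℝ := -x * Real.logb 2 x - (1 - x) * Real.logb 2 (1 - x)

/-- The (cyclic) convolution `α * β = α(1−β) + β(1−α)`. -/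
def convo (a b : ℝ) : ℝ := a * (1 - b) + b * (1 - a)

lemma h2_eq (x : ℝ) : h2 x = Real.binEntropy x / Real.log 2 := by
  simp [h2, Real.binEntropy, Real.logb, Real.log_inv]
  ring

lemma h2_mono : StrictMonoOn h2 (Set.Icc 0 (1/2 : ℝ)) := by
  have h := Real.binEntropy_strictMonoOn
  intro a ha b hb hab
  rw [h2_eq, h2_eq]
  have e : (1:ℝ)/2 = 2⁻¹ := by norm_num
  rw [e] at ha hb
  exact div_lt_div_of_pos_right (h ha hb hab) (Real.log_pos one_lt_two)

lemma h2_zero : h2 0 = 0 := by simp [h2]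

lemma h2_half : h2 (1/2) = 1 := by
  rw [h2_eq]
  have e : (1:ℝ)/2 = 2⁻¹ := by norm_num
  rw [e, Real.binEntropy_two_inv]
  exact div_self (Real.log_pos one_lt_two).ne'

lemma hasDerivAt_h2 {p : ℝ} (hp0 : 0 < p) (hp1 : p < 1) :
    HasDerivAt h2 ((Real.log (1 - p) - Real.log p) / Real.log 2) p := by
  have h := (Real.hasDerivAt_binEntropy hp0.ne' (by linarith)).div_const (Real.log 2)
  have heq : h2 = fun x => Real.binEntropy x / Real.log 2 := funext h2_eq
  rw [heq]; exact h

lemma h2_cont : Continuous h2 := by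
  have heq : h2 = fun x => Real.binEntropy x / Real.log 2 := funext h2_eq
  rw [heq]; exact Real.binEntropy_continuous.div_const _

lemma F_anti {a : ℝ} (ha : a ∈ Set.Ioo (0:ℝ) (1/2)) :
    StrictAntiOn (fun b => h2 (convo a b) - h2 b) (Set.Ioo (0:ℝ) (1/2)) := by
  obtain ⟨ha0, ha1⟩ := ha
  apply strictAntiOn_of_deriv_neg (convex_Ioo _ _)
  · exact ((h2_cont.comp (by unfold convo; fun_prop)).sub h2_cont).continuousOn
  · intro b hb
    rw [interior_Ioo] at hb
    obtain ⟨hb0, hb1⟩ := hb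
    set c := convo a b with hc
    have hc1 : b < c := by simp only [hc, convo]; nlinarith
    have hc2 : c < 1/2 := by simp only [hc, convo]; nlinarith
    have hc0 : 0 < c := hb0.trans hc1
    have hconv : HasDerivAt (fun b => convo a b) (1 - 2*a) b := by
      have e : (fun b => convo a b) = fun b => (1-2*a)*b + a := by
        funext t; simp [convo]; ring
      rw [e]
      simpa using ((hasDerivAt_id b).const_mul (1-2*a)).add_const a
    have hF : HasDerivAt (fun b => h2 (convo a b) - h2 b)
        ((Real.log (1 - c) - Real.log c) / Real.log 2 * (1 - 2*a)
          - (Real.log (1 - b) - Real.log b) / Real.log 2) b :=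
      by have := ((hasDerivAt_h2 hc0 (by linarith)).comp b hconv).sub
                  (hasDerivAt_h2 hb0 (by linarith))
         exact this
    rw [hF.deriv]
    have hL2 : 0 < Real.log 2 := Real.log_pos one_lt_two
    have h1 : Real.log b < Real.log c := Real.log_lt_log hb0 hc1
    have h2' : Real.log (1 - c) < Real.log (1 - b) :=
      Real.log_lt_log (by linarith) (by linarith)
    have h3 : 0 < Real.log (1 - c) - Real.log c := by
      have := Real.log_lt_log hc0 (show c < 1 - c by linarith)
      linarith
    have e : (Real.log (1 - c) - Real.log c) / Real.log 2 * (1 - 2*a)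
          - (Real.log (1 - b) - Real.log b) / Real.log 2
        = ((Real.log (1 - c) - Real.log c) * (1 - 2*a)
          - (Real.log (1 - b) - Real.log b)) / Real.log 2 := by ring
    rw [e]
    apply div_neg_of_neg_of_pos _ hL2
    nlinarith [mul_pos h3 (show (0:ℝ) < 2*a by linarith)]

/-- Let `g = h₂⁻¹ : [0,1] → [0,1/2]` be the inverse of `h₂` restricted to
`[0,1/2]`. Then `f(x,y) = h₂(h₂⁻¹(x) * h₂⁻¹(y)) − y` is strictly increasing in `x` and
strictly decreasing in `y` on `(0,1/2) × (0,1/2)`. -/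
theorem stmt_17 (g : ℝ → ℝ)
    (hg_mem : ∀ y ∈ Set.Icc (0 : ℝ) 1, g y ∈ Set.Icc (0 : ℝ) (1 / 2))
    (hg_inv : ∀ y ∈ Set.Icc (0 : ℝ) 1, h2 (g y) = y) :
    (∀ x x' y : ℝ, x ∈ Set.Ioo (0 : ℝ) (1 / 2) → x' ∈ Set.Ioo (0 : ℝ) (1 / 2) →
      y ∈ Set.Ioo (0 : ℝ) (1 / 2) → x < x' →
      h2 (convo (g x) (g y)) - y < h2 (convo (g x') (g y)) - y) ∧
    (∀ x y y' : ℝ, x ∈ Set.Ioo (0 : ℝ) (1 / 2) → y ∈ Set.Ioo (0 : ℝ) (1 / 2) →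
      y' ∈ Set.Ioo (0 : ℝ) (1 / 2) → y < y' →
      h2 (convo (g x) (g y')) - y' < h2 (convo (g x) (g y)) - y) := by
  have hIcc : ∀ {t : ℝ}, t ∈ Set.Ioo (0:ℝ) (1/2) → t ∈ Set.Icc (0:ℝ) 1 := by
    intro t ht; exact ⟨ht.1.le, by linarith [ht.2]⟩
  have hmemg : ∀ {t : ℝ}, t ∈ Set.Ioo (0:ℝ) (1/2) → g t ∈ Set.Ioo (0:ℝ) (1/2) := by
    intro t ht
    have hm := hg_mem t (hIcc ht)
    have hi := hg_inv t (hIcc ht)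
    constructor
    · rcases eq_or_lt_of_le hm.1 with h | h
      · exfalso; rw [← h, h2_zero] at hi; linarith [ht.1]
      · exact h
    · rcases eq_or_lt_of_le hm.2 with h | h
      · exfalso; rw [h, h2_half] at hi; linarith [ht.2]
      · exact h
  have hglt : ∀ {s t : ℝ}, s ∈ Set.Ioo (0:ℝ) (1/2) → t ∈ Set.Ioo (0:ℝ) (1/2) →
      s < t → g s < g t := by
    intro s t hs ht hst
    have := (h2_mono.lt_iff_lt (hg_mem s (hIcc hs)) (hg_mem t (hIcc ht))).mp
    apply this
    rw [hg_inv s (hIcc hs), hg_inv t (hIcc ht)]; exact hst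
  constructor
  · intro x x' y hx hx' hy hlt
    have hgx := hmemg hx
    have hgx' := hmemg hx'
    have hgy := hmemg hy
    have hgg := hglt hx hx' hlt
    have hconv_lt : convo (g x) (g y) < convo (g x') (g y) := by
      simp only [convo]; nlinarith [hgy.1, hgy.2]
    have hm1 : convo (g x) (g y) ∈ Set.Icc (0:ℝ) (1/2) := by
      constructor <;> [skip; skip] <;> · simp only [convo]
                                         nlinarith [hgx.1, hgx.2, hgy.1, hgy.2]
    have hm2 : convo (g x') (g y) ∈ Set.Icc (0:ℝ) (1/2) := by
      constructor <;> [skip; skip] <;> · simp only [convo]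
                                         nlinarith [hgx'.1, hgx'.2, hgy.1, hgy.2]
    exact sub_lt_sub_right (h2_mono hm1 hm2 hconv_lt) y
  · intro x y y' hx hy hy' hlt
    have hgy := hmemg hy
    have hgy' := hmemg hy'
    have hgg := hglt hy hy' hlt
    have hF := F_anti (hmemg hx) hgy hgy' hgg
    simp only at hF
    rw [hg_inv y (hIcc hy), hg_inv y' (hIcc hy')] at hF
    linarith
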